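/- If X̃₁ and X̃₂ are strong fuzzy incidence graphs, then their tensor product X̃ = X̃₁ ⋄ X̃₂ is a strong fuzzy incidence graph. -/

import Mathlib

open scoped BigOperators

/-- A fuzzy incidence graph on a finite vertex type `V`.  An (undirected, loopless) edge `xy`
is encoded by the symmetric membership function `rho`, and the incidence pair `(x, xy)`
is encoded by `eta x y` (so `eta x y` is the membership value of the pair consisting of the
vertex `x` and the edge joining `x` and `y`). All membership values lie in `[0,1]`,
`rho xy ≤ min (eps x) (eps y)` and `eta (x, xy) ≤ min (eps x) (rho xy)`. -/
structure FIG (V : Type) [Fintype V] [DecidableEq V] where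
  eps : V → ℝ
  rho : V → V → ℝ
  eta : V → V → ℝ
  eps_nonneg : ∀ x, 0 ≤ eps x
  eps_le_one : ∀ x, eps x ≤ 1
  rho_nonneg : ∀ x y, 0 ≤ rho x y
  rho_symm : ∀ x y, rho x y = rho y x
  rho_le : ∀ x y, rho x y ≤ min (eps x) (eps y)
  rho_irrefl : ∀ x, rho x x = 0
  eta_nonneg : ∀ x y, 0 ≤ eta x y
  eta_le : ∀ x y, eta x y ≤ min (eps x) (rho x y)

namespace FIG

variable {V V₁ V₂ : Type} [Fintype V] [DecidableEq V]
  [Fintype V₁] [DecidableEq V₁] [Fintype V₂] [DecidableEq V₂]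

/-- `(x, xy)` is a pair of the fuzzy incidence graph (i.e. belongs to the support `η*`). -/
def IsPair (G : FIG V) (x y : V) : Prop := 0 < G.eta x y

/-- the minimum of the two pair weights along one edge step of an incidence path -/
def pairMin (G : FIG V) (a b : V) : ℝ := min (G.eta a b) (G.eta b a)

/-- the minimum of the pair weights along the internal steps of a vertex list -/
def chainStrength (G : FIG V) : List V → ℝ
  | [] => 1
  | [_] => 1
  | a :: b :: l => min (G.pairMin a b) (G.chainStrength (b :: l))

/-- The set of incidence strengths of incidence paths from the vertex `x` to the edge `yz`:
a path is recorded by its (pairwise distinct) sequence of vertices, starting at `x` and ending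
at an endpoint of the edge `yz`; its strength is the minimum of the weights of its pairs
(pairs of weight `0` are not genuine pairs, but a list using them has strength `0`, so
including such lists does not alter the supremum below). -/
def pathStrengths (G : FIG V) (x y z : V) : Set ℝ :=
  {s | ∃ l : List V, l.Nodup ∧ l.head? = some x ∧
      ((l.getLast? = some y ∧ s = min (G.chainStrength l) (G.eta y z)) ∨
       (l.getLast? = some z ∧ s = min (G.chainStrength l) (G.eta z y)))}

/-- `ICONN G x y z` is the greatest incidence strength of an incidence path from the
vertex `x` to the edge `yz` (the incidence connectivity `ICONN_G (x, yz)`). -/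
noncomputable def ICONN (G : FIG V) (x y z : V) : ℝ := sSup (G.pathStrengths x y z)

/-- the fuzzy incidence graph obtained by deleting the pair `(a, ab)` -/
def deletePair (G : FIG V) (a b : V) : FIG V where
  eps := G.eps
  rho := G.rho
  eta := fun u v => if u = a ∧ v = b then 0 else G.eta u v
  eps_nonneg := G.eps_nonneg
  eps_le_one := G.eps_le_one
  rho_nonneg := G.rho_nonneg
  rho_symm := G.rho_symm
  rho_le := G.rho_le
  rho_irrefl := G.rho_irrefl
  eta_nonneg := by
    intro u v; (try dsimp only); split
    · exact le_refl 0
    · exact G.eta_nonneg u v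
  eta_le := by
    intro u v; (try dsimp only); split
    · exact le_min (G.eps_nonneg u) (G.rho_nonneg u v)
    · exact G.eta_le u v

/-- The pair `(x, xy)` is strong: its weight is at least the incidence connectivity
between `x` and the edge `xy` in the graph obtained by deleting the pair `(x, xy)`. -/
def IsStrongPair (G : FIG V) (x y : V) : Prop :=
  (G.deletePair x y).ICONN x x y ≤ G.eta x y

/-- a strong fuzzy incidence graph: every pair is strong -/
def Strong (G : FIG V) : Prop := ∀ x y, G.IsPair x y → G.IsStrongPair x y

/-- The pair `(x, xy)` is effective: `η(x, xy) = min (ε x) (ρ xy)`. -/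
def EffectivePair (G : FIG V) (x y : V) : Prop :=
  G.eta x y = min (G.eps x) (G.rho x y)

/-- a fuzzy incidence graph in which every pair is effective -/
def EffectivePairs (G : FIG V) : Prop := ∀ x y, G.IsPair x y → G.EffectivePair x y

/-- The tensor product of two fuzzy incidence graphs: `(a₁,b₁)(a₂,b₂)` is an edge when
`a₁a₂ ∈ E₁` and `b₁b₂ ∈ E₂`; a pair of the product exists when all four corresponding
pairs of the factors exist, with weight `min (η₁ (a₁,a₁a₂)) (η₂ (b₁,b₁b₂))`. -/
noncomputable def tensor (G₁ : FIG V₁) (G₂ : FIG V₂) : FIG (V₁ × V₂) where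
  eps := fun p => min (G₁.eps p.1) (G₂.eps p.2)
  rho := fun p q => min (G₁.rho p.1 q.1) (G₂.rho p.2 q.2)
  eta := fun p q =>
    if 0 < G₁.eta p.1 q.1 ∧ 0 < G₁.eta q.1 p.1 ∧ 0 < G₂.eta p.2 q.2 ∧ 0 < G₂.eta q.2 p.2
    then min (G₁.eta p.1 q.1) (G₂.eta p.2 q.2) else 0
  eps_nonneg := fun p => le_min (G₁.eps_nonneg p.1) (G₂.eps_nonneg p.2)
  eps_le_one := fun p => min_le_of_left_le (G₁.eps_le_one p.1)
  rho_nonneg := fun p q => le_min (G₁.rho_nonneg _ _) (G₂.rho_nonneg _ _)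
  rho_symm := fun p q => by
    (try dsimp only); rw [G₁.rho_symm p.1 q.1, G₂.rho_symm p.2 q.2]
  rho_le := by
    intro p q; (try dsimp only)
    refine le_min (le_min (min_le_of_left_le ?_) (min_le_of_right_le ?_))
      (le_min (min_le_of_left_le ?_) (min_le_of_right_le ?_))
    · exact le_trans (G₁.rho_le p.1 q.1) (min_le_left _ _)
    · exact le_trans (G₂.rho_le p.2 q.2) (min_le_left _ _)
    · exact le_trans (G₁.rho_le p.1 q.1) (min_le_right _ _)
    · exact le_trans (G₂.rho_le p.2 q.2) (min_le_right _ _)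
  rho_irrefl := by
    intro p; (try dsimp only)
    rw [G₁.rho_irrefl, G₂.rho_irrefl]
    exact min_self 0
  eta_nonneg := by
    intro p q; (try dsimp only); split
    · exact le_min (G₁.eta_nonneg _ _) (G₂.eta_nonneg _ _)
    · exact le_refl 0
  eta_le := by
    intro p q; (try dsimp only); split
    · refine le_min (le_min (min_le_of_left_le ?_) (min_le_of_right_le ?_))
        (le_min (min_le_of_left_le ?_) (min_le_of_right_le ?_))
      · exact le_trans (G₁.eta_le p.1 q.1) (min_le_left _ _)
      · exact le_trans (G₂.eta_le p.2 q.2) (min_le_left _ _)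
      · exact le_trans (G₁.eta_le p.1 q.1) (min_le_right _ _)
      · exact le_trans (G₂.eta_le p.2 q.2) (min_le_right _ _)
    · exact le_min (le_min (G₁.eps_nonneg _) (G₂.eps_nonneg _))
        (le_min (G₁.rho_nonneg _ _) (G₂.rho_nonneg _ _))


/-! ### Auxiliary lemmas -/

lemma chainStrength_cons_cons (G : FIG V) (a b : V) (l : List V) :
    G.chainStrength (a :: b :: l) = min (G.pairMin a b) (G.chainStrength (b :: l)) := rfl

lemma chain_le_one (G : FIG V) : ∀ l : List V, G.chainStrength l ≤ 1
  | [] => le_refl 1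
  | [_] => le_refl 1
  | _ :: b :: l => by
      rw [chainStrength_cons_cons]
      exact min_le_of_right_le (chain_le_one G (b :: l))

lemma chain_cons_le (G : FIG V) : ∀ (a : V) (l : List V),
    G.chainStrength (a :: l) ≤ G.chainStrength l
  | _, [] => le_refl 1
  | a, b :: l => by rw [chainStrength_cons_cons]; exact min_le_right _ _

lemma chain_append_le (G : FIG V) : ∀ (l₁ l₂ : List V),
    G.chainStrength (l₁ ++ l₂) ≤ G.chainStrength l₂
  | [], _ => le_refl _
  | a :: l₁, l₂ => le_trans (G.chain_cons_le a (l₁ ++ l₂)) (chain_append_le G l₁ l₂)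

/-- loop removal: any vertex list can be replaced by a duplicate-free one with the same
endpoints and at least the same chain strength -/
lemma exists_nodup_chain (G : FIG V) : ∀ (n : ℕ) (l : List V), l.length ≤ n →
    ∃ l' : List V, l'.Nodup ∧ l'.head? = l.head? ∧ l'.getLast? = l.getLast? ∧
      (∀ v ∈ l', v ∈ l) ∧ G.chainStrength l ≤ G.chainStrength l' := by
  intro n
  induction n with
  | zero =>
    intro l hl
    have hnil : l = [] := List.length_eq_zero_iff.mp (Nat.le_zero.mp hl)
    subst hnil
    exact ⟨[], List.nodup_nil, rfl, rfl, fun v h => h, le_refl _⟩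
  | succ n ih =>
    intro l hl
    match l with
    | [] => exact ⟨[], List.nodup_nil, rfl, rfl, fun v h => h, le_refl _⟩
    | a :: t =>
      by_cases ha : a ∈ t
      · obtain ⟨B, C, hBC⟩ := List.append_of_mem ha
        subst hBC
        have heq : a :: (B ++ a :: C) = (a :: B) ++ (a :: C) := by simp
        have hlen : (a :: C).length ≤ n := by
          simp only [List.length_cons, List.length_append] at hl ⊢
          omega
        obtain ⟨l', h1, h2, h3, h4, h5⟩ := ih (a :: C) hlen
        refine ⟨l', h1, ?_, ?_, ?_, ?_⟩
        · rw [h2]; rfl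
        · rw [h3, heq, List.getLast?_append_of_ne_nil _ (List.cons_ne_nil a C)]
        · intro v hv
          have hm := h4 v hv
          simp only [List.mem_cons, List.mem_append] at hm ⊢
          tauto
        · rw [heq]
          exact le_trans (chain_append_le G (a :: B) (a :: C)) h5
      · match t with
        | [] =>
          exact ⟨[a], List.nodup_singleton a, rfl, rfl, fun v h => h, le_refl _⟩
        | b :: s =>
          have hlen : (b :: s).length ≤ n := by
            simp only [List.length_cons] at hl ⊢; omega
          obtain ⟨t', h1, h2, h3, h4, h5⟩ := ih (b :: s) hlen
          match t' with
          | [] => simp at h2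
          | b' :: s' =>
            have hb : b' = b := by simpa using h2
            subst hb
            refine ⟨a :: b' :: s', List.nodup_cons.mpr ⟨fun h => ha (h4 _ h), h1⟩,
              rfl, ?_, ?_, ?_⟩
            · rw [List.getLast?_cons_cons, h3, List.getLast?_cons_cons]
            · intro v hv
              rcases List.mem_cons.mp hv with h | h
              · exact h ▸ List.mem_cons_self (a := a)
              · exact List.mem_cons_of_mem a (h4 _ h)
            · rw [chainStrength_cons_cons, chainStrength_cons_cons]
              exact min_le_min (le_refl _) h5

lemma chain_map_le {A B : Type} [Fintype A] [DecidableEq A] [Fintype B] [DecidableEq B]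
    (G : FIG A) (H : FIG B) (f : A → B)
    (hf : ∀ u v, G.eta u v ≤ H.eta (f u) (f v)) :
    ∀ l : List A, G.chainStrength l ≤ H.chainStrength (l.map f)
  | [] => le_refl 1
  | [_] => le_refl 1
  | a :: b :: l => by
      rw [List.map_cons, List.map_cons, chainStrength_cons_cons, chainStrength_cons_cons]
      refine min_le_min (min_le_min (hf a b) (hf b a)) ?_
      have h := chain_map_le G H f hf (b :: l)
      simpa using h

lemma min_le_max_min {a b a' b' e : ℝ} (ha : a ≤ max a' e) (hb : b ≤ max b' e) :
    min a b ≤ max (min a' b') e := by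
  rcases le_total a' e with h1 | h1
  · have hae : a ≤ e := by rwa [max_eq_right h1] at ha
    exact le_trans (min_le_left a b) (le_trans hae (le_max_right _ _))
  · rcases le_total b' e with h2 | h2
    · have hbe : b ≤ e := by rwa [max_eq_right h2] at hb
      exact le_trans (min_le_right a b) (le_trans hbe (le_max_right _ _))
    · have ha' : a ≤ a' := by rwa [max_eq_left h1] at ha
      have hb' : b ≤ b' := by rwa [max_eq_left h2] at hb
      exact le_trans (min_le_min ha' hb') (le_max_left _ _)

lemma chain_le_max_delete (G : FIG V) (x y : V) :
    ∀ l : List V, G.chainStrength l ≤ max ((G.deletePair x y).chainStrength l) (G.eta x y)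
  | [] => le_max_of_le_left (le_refl 1)
  | [_] => le_max_of_le_left (le_refl 1)
  | a :: b :: l => by
      rw [chainStrength_cons_cons, chainStrength_cons_cons]
      have key : ∀ u v : V, G.eta u v ≤ max ((G.deletePair x y).eta u v) (G.eta x y) := by
        intro u v
        by_cases h : u = x ∧ v = y
        · obtain ⟨rfl, rfl⟩ := h
          exact le_max_right _ _
        · have hd : (G.deletePair x y).eta u v = G.eta u v := by
            show (if u = x ∧ v = y then (0:ℝ) else G.eta u v) = G.eta u v
            rw [if_neg h]
          rw [hd]
          exact le_max_left _ _
      refine min_le_max_min ?_ (chain_le_max_delete G x y (b :: l))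
      exact min_le_max_min (key a b) (key b a)

lemma eta_self_nonpos (G : FIG V) (u : V) : G.eta u u ≤ 0 := by
  have h := G.eta_le u u
  rw [G.rho_irrefl u] at h
  exact le_trans h (min_le_right _ _)

/-- the key one-coordinate estimate: in a strong FIG, any (not necessarily duplicate-free)
vertex list from `x` to `y` followed by the pair `(y, yx)` has strength at most `η (x, xy)` -/
lemma min_chain_le (G : FIG V) (hG : G.Strong) {x y : V}
    (hxy : 0 < G.eta x y) (hyx : 0 < G.eta y x) (l : List V)
    (hh : l.head? = some x) (hlast : l.getLast? = some y) :
    min (G.chainStrength l) (G.eta y x) ≤ G.eta x y := by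
  have hne : x ≠ y := by
    rintro rfl
    exact absurd hxy (not_lt.mpr (G.eta_self_nonpos x))
  have hdel : (G.deletePair x y).eta y x = G.eta y x := by
    show (if y = x ∧ x = y then (0:ℝ) else G.eta y x) = G.eta y x
    rw [if_neg]
    rintro ⟨h, -⟩
    exact hne h.symm
  obtain ⟨l', h1, h2, h3, -, h5⟩ := exists_nodup_chain (G.deletePair x y) l.length l le_rfl
  have hmem : min ((G.deletePair x y).chainStrength l') (G.eta y x)
      ∈ (G.deletePair x y).pathStrengths x x y := by
    refine ⟨l', h1, by rw [h2, hh], Or.inr ⟨by rw [h3, hlast], by rw [hdel]⟩⟩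
  have hbdd : BddAbove ((G.deletePair x y).pathStrengths x x y) := by
    refine ⟨1, ?_⟩
    rintro s ⟨m, -, -, (⟨-, rfl⟩ | ⟨-, rfl⟩)⟩ <;>
      exact min_le_of_left_le (chain_le_one _ m)
  have hstrong : (G.deletePair x y).ICONN x x y ≤ G.eta x y := hG x y hxy
  have hle : min ((G.deletePair x y).chainStrength l) (G.eta y x) ≤ G.eta x y := by
    have h6 : min ((G.deletePair x y).chainStrength l) (G.eta y x)
        ≤ min ((G.deletePair x y).chainStrength l') (G.eta y x) := min_le_min h5 (le_refl _)
    have h7 := le_csSup hbdd hmem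
    exact le_trans h6 (le_trans h7 hstrong)
  calc min (G.chainStrength l) (G.eta y x)
      ≤ max (min ((G.deletePair x y).chainStrength l) (G.eta y x)) (G.eta x y) :=
        min_le_max_min (chain_le_max_delete G x y l) (le_max_left _ _)
    _ ≤ G.eta x y := max_le hle (le_refl _)

/-- **Theorem 33.** The tensor product of two strong fuzzy incidence graphs is a strong
fuzzy incidence graph. -/
theorem tensor_strong (G₁ : FIG V₁) (G₂ : FIG V₂)
    (h₁ : G₁.Strong) (h₂ : G₂.Strong) : (G₁.tensor G₂).Strong := by
  intro p q hpq
  have hpq' : 0 < (G₁.tensor G₂).eta p q := hpq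
  by_cases hc : 0 < G₁.eta p.1 q.1 ∧ 0 < G₁.eta q.1 p.1 ∧
      0 < G₂.eta p.2 q.2 ∧ 0 < G₂.eta q.2 p.2
  swap
  · exfalso
    have hz : (G₁.tensor G₂).eta p q = 0 := by
      show (if 0 < G₁.eta p.1 q.1 ∧ 0 < G₁.eta q.1 p.1 ∧
          0 < G₂.eta p.2 q.2 ∧ 0 < G₂.eta q.2 p.2
        then min (G₁.eta p.1 q.1) (G₂.eta p.2 q.2) else 0) = 0
      rw [if_neg hc]
    rw [hz] at hpq'
    exact lt_irrefl 0 hpq'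
  obtain ⟨h1, h1', h2, h2'⟩ := hc
  have hne : p ≠ q := by
    rintro rfl
    exact absurd h1 (not_lt.mpr (G₁.eta_self_nonpos p.1))
  have heta : (G₁.tensor G₂).eta p q = min (G₁.eta p.1 q.1) (G₂.eta p.2 q.2) := by
    show (if 0 < G₁.eta p.1 q.1 ∧ 0 < G₁.eta q.1 p.1 ∧
        0 < G₂.eta p.2 q.2 ∧ 0 < G₂.eta q.2 p.2
      then min (G₁.eta p.1 q.1) (G₂.eta p.2 q.2) else 0)
      = min (G₁.eta p.1 q.1) (G₂.eta p.2 q.2)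
    rw [if_pos ⟨h1, h1', h2, h2'⟩]
  have hetaqp : (G₁.tensor G₂).eta q p = min (G₁.eta q.1 p.1) (G₂.eta q.2 p.2) := by
    show (if 0 < G₁.eta q.1 p.1 ∧ 0 < G₁.eta p.1 q.1 ∧
        0 < G₂.eta q.2 p.2 ∧ 0 < G₂.eta p.2 q.2
      then min (G₁.eta q.1 p.1) (G₂.eta q.2 p.2) else 0)
      = min (G₁.eta q.1 p.1) (G₂.eta q.2 p.2)
    rw [if_pos ⟨h1', h1, h2', h2⟩]
  have hf1 : ∀ u v : V₁ × V₂,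
      ((G₁.tensor G₂).deletePair p q).eta u v ≤ G₁.eta u.1 v.1 := by
    intro u v
    have h0 : (G₁.tensor G₂).eta u v ≤ G₁.eta u.1 v.1 := by
      show (if 0 < G₁.eta u.1 v.1 ∧ 0 < G₁.eta v.1 u.1 ∧
          0 < G₂.eta u.2 v.2 ∧ 0 < G₂.eta v.2 u.2
        then min (G₁.eta u.1 v.1) (G₂.eta u.2 v.2) else 0) ≤ G₁.eta u.1 v.1
      split
      · exact min_le_left _ _
      · exact G₁.eta_nonneg _ _
    show (if u = p ∧ v = q then (0:ℝ) else (G₁.tensor G₂).eta u v) ≤ G₁.eta u.1 v.1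
    split
    · exact G₁.eta_nonneg _ _
    · exact h0
  have hf2 : ∀ u v : V₁ × V₂,
      ((G₁.tensor G₂).deletePair p q).eta u v ≤ G₂.eta u.2 v.2 := by
    intro u v
    have h0 : (G₁.tensor G₂).eta u v ≤ G₂.eta u.2 v.2 := by
      show (if 0 < G₁.eta u.1 v.1 ∧ 0 < G₁.eta v.1 u.1 ∧
          0 < G₂.eta u.2 v.2 ∧ 0 < G₂.eta v.2 u.2
        then min (G₁.eta u.1 v.1) (G₂.eta u.2 v.2) else 0) ≤ G₂.eta u.2 v.2
      split
      · exact min_le_right _ _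
      · exact G₂.eta_nonneg _ _
    show (if u = p ∧ v = q then (0:ℝ) else (G₁.tensor G₂).eta u v) ≤ G₂.eta u.2 v.2
    split
    · exact G₂.eta_nonneg _ _
    · exact h0
  show (((G₁.tensor G₂).deletePair p q).ICONN p p q) ≤ (G₁.tensor G₂).eta p q
  refine Real.sSup_le ?_ (le_of_lt hpq')
  rintro s ⟨l, hnod, hh, (⟨hlast, rfl⟩ | ⟨hlast, rfl⟩)⟩
  · -- path ends at p: the final pair is the deleted one
    have hz : ((G₁.tensor G₂).deletePair p q).eta p q = 0 := by
      show (if p = p ∧ q = q then (0:ℝ) else (G₁.tensor G₂).eta p q) = 0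
      rw [if_pos ⟨rfl, rfl⟩]
    rw [hz]
    exact le_trans (min_le_right _ _) (le_of_lt hpq')
  · -- path ends at q
    have hqp : ((G₁.tensor G₂).deletePair p q).eta q p = (G₁.tensor G₂).eta q p := by
      show (if q = p ∧ p = q then (0:ℝ) else (G₁.tensor G₂).eta q p) = (G₁.tensor G₂).eta q p
      rw [if_neg]
      rintro ⟨h, -⟩
      exact hne h.symm
    have b1 : min (((G₁.tensor G₂).deletePair p q).chainStrength l)
        (((G₁.tensor G₂).deletePair p q).eta q p) ≤ G₁.eta p.1 q.1 := by
      have hb : min (((G₁.tensor G₂).deletePair p q).chainStrength l)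
          (((G₁.tensor G₂).deletePair p q).eta q p)
          ≤ min (G₁.chainStrength (l.map Prod.fst)) (G₁.eta q.1 p.1) := by
        refine min_le_min (chain_map_le _ G₁ Prod.fst hf1 l) ?_
        rw [hqp, hetaqp]
        exact min_le_left _ _
      refine le_trans hb (min_chain_le G₁ h₁ h1 h1' (l.map Prod.fst) ?_ ?_)
      · rw [List.head?_map, hh]; rfl
      · rw [List.getLast?_map, hlast]; rfl
    have b2 : min (((G₁.tensor G₂).deletePair p q).chainStrength l)
        (((G₁.tensor G₂).deletePair p q).eta q p) ≤ G₂.eta p.2 q.2 := by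
      have hb : min (((G₁.tensor G₂).deletePair p q).chainStrength l)
          (((G₁.tensor G₂).deletePair p q).eta q p)
          ≤ min (G₂.chainStrength (l.map Prod.snd)) (G₂.eta q.2 p.2) := by
        refine min_le_min (chain_map_le _ G₂ Prod.snd hf2 l) ?_
        rw [hqp, hetaqp]
        exact min_le_right _ _
      refine le_trans hb (min_chain_le G₂ h₂ h2 h2' (l.map Prod.snd) ?_ ?_)
      · rw [List.head?_map, hh]; rfl
      · rw [List.getLast?_map, hlast]; rfl
    rw [heta]
    exact le_min b1 b2

end FIG
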